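/- Let X be an element of the free ℝ-algebra on generators x_1,…,x_d, and suppose X^W ≠ 0 for some word W of length n. Then for every k ≥ n+1 there exist k×k real matrices N_1,…,N_d, each tridiagonal antisymmetric, such that Ñ(X) ≠ 0, where Ñ is the unique ℝ-algebra homomorphism from the free ℝ-algebra on x_1,…,x_d into k×k real matrices sending x_j to N_j for j = 1,…,d. -/

import Mathlib

open Matrix

/-- A `k × k` real matrix is tridiagonal antisymmetric if `N + Nᵀ = 0` and its `(a,b)`-entry
vanishes whenever `|a - b| ≠ 1`. -/
def TriAnti {k : ℕ} (N : Matrix (Fin k) (Fin k) ℝ) : Prop :=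
  N + Nᵀ = 0 ∧ ∀ a b : Fin k, ((a : ℤ) - (b : ℤ)).natAbs ≠ 1 → N a b = 0

/-- The word-basis coordinate `X^V` of an element `X` of the free `ℝ`-algebra on `d`
generators, at the word `V`. -/
noncomputable def coords {d : ℕ} (X : FreeAlgebra ℝ (Fin d)) (V : List (Fin d)) : ℝ :=
  (FreeAlgebra.equivMonoidAlgebraFreeMonoid X : MonoidAlgebra ℝ (FreeMonoid (Fin d))).coeff
    (FreeMonoid.ofList V)

namespace Stmt7Aux

open MvPolynomial

variable {d k : ℕ}

/-- Generic tridiagonal antisymmetric matrix with polynomial entries. -/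
noncomputable def Nmat (k : ℕ) (j : Fin d) :
    Matrix (Fin k) (Fin k) (MvPolynomial (Fin d × ℕ) ℝ) :=
  Matrix.of fun a b =>
    if (b : ℕ) = (a : ℕ) + 1 then MvPolynomial.X (j, (a : ℕ))
    else if (a : ℕ) = (b : ℕ) + 1 then -MvPolynomial.X (j, (b : ℕ)) else 0

/-- The multilinear monomial using the variables `(wf i, i)` for `i ∈ S`. -/
noncomputable def Mmon (wf : ℕ → Fin d) (S : Finset ℕ) : (Fin d × ℕ) →₀ ℕ :=
  ∑ i ∈ S, Finsupp.single (wf i, i) 1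

lemma Mmon_apply (wf : ℕ → Fin d) (S : Finset ℕ) (x : Fin d) (i : ℕ) :
    Mmon wf S (x, i) = if i ∈ S ∧ x = wf i then 1 else 0 := by
  classical
  rw [Mmon, Finset.sum_apply']
  have h : ∀ i' ∈ S, (Finsupp.single ((wf i', i') : Fin d × ℕ) (1 : ℕ)) (x, i)
      = if i' = i then (if x = wf i then 1 else 0) else 0 := by
    intro i' _
    rcases eq_or_ne i' i with rfl | hne
    · rw [if_pos rfl, Finsupp.single_apply]
      by_cases hx : x = wf i'
      · rw [if_pos (by rw [hx]), if_pos hx]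
      · rw [if_neg (fun h => hx (congrArg Prod.fst h).symm), if_neg hx]
    · rw [if_neg hne, Finsupp.single_apply,
        if_neg (fun h => hne (congrArg Prod.snd h))]
  rw [Finset.sum_congr rfl h, Finset.sum_ite_eq' S i]
  by_cases hi : i ∈ S
  · rw [if_pos hi]
    by_cases hx : x = wf i
    · rw [if_pos hx, if_pos ⟨hi, hx⟩]
    · rw [if_neg hx, if_neg (fun h => hx h.2)]
  · rw [if_neg hi, if_neg (fun h => hi h.1)]

lemma Mmon_mem_support (wf : ℕ → Fin d) (S : Finset ℕ) (x : Fin d) (i : ℕ) :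
    (x, i) ∈ (Mmon wf S).support ↔ i ∈ S ∧ x = wf i := by
  rw [Finsupp.mem_support_iff, Mmon_apply]
  by_cases h : i ∈ S ∧ x = wf i <;> simp [h]

lemma Mmon_erase (wf : ℕ → Fin d) (S : Finset ℕ) (i : ℕ) (hi : i ∈ S) :
    Mmon wf S - Finsupp.single (wf i, i) 1 = Mmon wf (S.erase i) := by
  classical
  have : Mmon wf S = Finsupp.single (wf i, i) 1 + Mmon wf (S.erase i) :=
    (Finset.add_sum_erase S
      (fun x => (Finsupp.single ((wf x, x) : Fin d × ℕ) (1 : ℕ))) hi).symm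
  rw [this, add_tsub_cancel_left]

lemma Mmon_eq_zero_iff (wf : ℕ → Fin d) (S : Finset ℕ) :
    Mmon wf S = 0 ↔ S = ∅ := by
  constructor
  · intro h
    by_contra hS
    obtain ⟨i, hi⟩ := Finset.nonempty_iff_ne_empty.2 hS
    have := Mmon_apply wf S (wf i) i
    rw [h] at this
    simp [hi] at this
  · rintro rfl; simp [Mmon]

/-- Key combinatorial lemma: the coefficient of the staircase monomial in the matrix
entry `(a, |W|)` of the product of generic tridiagonal matrices along a word `V`. -/
lemma key (hd : 0 < d) (W : List (Fin d)) (hn : W.length < k) (V : List (Fin d)) :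
    ∀ S : Finset ℕ, S ⊆ Finset.range W.length → ∀ a : Fin k,
      MvPolynomial.coeff (Mmon (fun i => W.getD i ⟨0, hd⟩) S)
          ((V.map (Nmat k)).prod a ⟨W.length, hn⟩)
        = if (a : ℕ) ≤ W.length ∧ S = Finset.Ico (a : ℕ) W.length ∧ V = W.drop (a : ℕ)
          then 1 else 0 := by
  classical
  set n := W.length with hnn
  set wf : ℕ → Fin d := fun i => W.getD i ⟨0, hd⟩ with hwf
  induction V with
  | nil =>
    intro S hS a
    simp only [List.map_nil, List.prod_nil, Matrix.one_apply]
    rcases eq_or_ne a (⟨n, hn⟩ : Fin k) with rfl | ha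
    · rw [if_pos rfl, MvPolynomial.coeff_one]
      have h2 : Finset.Ico (((⟨n, hn⟩ : Fin k)) : ℕ) W.length = (∅ : Finset ℕ) :=
        Finset.Ico_self n
      have h3 : W.drop (((⟨n, hn⟩ : Fin k)) : ℕ) = [] := List.drop_length
      by_cases hS0 : S = ∅
      · rw [if_pos ((Mmon_eq_zero_iff wf S).2 hS0).symm,
          if_pos ⟨Nat.le_refl n, by rw [hS0, h2], h3.symm⟩]
      · rw [if_neg (fun h => hS0 ((Mmon_eq_zero_iff wf S).1 h.symm)),
          if_neg (fun hc => hS0 (hc.2.1.trans h2))]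
    · rw [if_neg ha, MvPolynomial.coeff_zero, if_neg]
      rintro ⟨h1, -, h3⟩
      have : n ≤ (a : ℕ) := by
        by_contra hlt
        push_neg at hlt
        have := congrArg List.length h3
        simp [hnn] at this
        omega
      exact ha (Fin.ext (le_antisymm h1 this))
  | cons j V ih =>
    intro S hS a
    rw [List.map_cons, List.prod_cons, Matrix.mul_apply, MvPolynomial.coeff_sum]
    have hterm : ∀ c : Fin k,
        MvPolynomial.coeff (Mmon wf S) (Nmat k j a c * (V.map (Nmat k)).prod c ⟨n, hn⟩)
          = if (c : ℕ) = (a : ℕ) + 1 then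
              (if (a : ℕ) ≤ n ∧ S = Finset.Ico (a : ℕ) n ∧ j :: V = W.drop (a : ℕ)
                then 1 else 0)
            else 0 := by
      intro c
      by_cases hup : (c : ℕ) = (a : ℕ) + 1
      · rw [if_pos hup]
        have hN : Nmat k j a c = MvPolynomial.X (j, (a : ℕ)) := by
          simp only [Nmat, Matrix.of_apply]
          rw [if_pos hup]
        rw [hN, mul_comm, MvPolynomial.coeff_mul_X']
        by_cases hmem : ((j, (a : ℕ)) : Fin d × ℕ) ∈ (Mmon wf S).support
        · rw [if_pos hmem]
          obtain ⟨haS, hja⟩ := (Mmon_mem_support wf S j (a : ℕ)).1 hmem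
          have halt : (a : ℕ) < n := Finset.mem_range.1 (hS haS)
          rw [hja, Mmon_erase wf S (a : ℕ) haS]
          rw [ih (S.erase (a : ℕ)) (fun x hx => hS (Finset.mem_of_mem_erase hx)) c]
          have hgetD : wf (a : ℕ) = W[(a : ℕ)]'(by omega) := List.getD_eq_getElem W _ halt
          have hdropa : W.drop (a : ℕ) = W[(a : ℕ)]'(by omega) :: W.drop ((a : ℕ) + 1) :=
            List.drop_eq_getElem_cons halt
          apply if_congr _ rfl rfl
          rw [hup]
          constructor
          · rintro ⟨h1, h2, h3⟩
            refine ⟨le_of_lt halt, ?_, ?_⟩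
            · have hIns : insert ((a : ℕ)) (Finset.Ico ((a : ℕ) + 1) n) = Finset.Ico (a : ℕ) n := by
                ext x
                simp only [Finset.mem_insert, Finset.mem_Ico]
                omega
              rw [← Finset.insert_erase haS, h2, hIns]
            · rw [hdropa, ← hgetD, h3]
          · rintro ⟨h1, h2, h3⟩
            rw [hdropa] at h3
            refine ⟨Nat.succ_le_of_lt halt, ?_, ?_⟩
            · rw [h2]
              ext x
              simp only [Finset.mem_erase, Finset.mem_Ico]
              omega
            · exact (List.cons.injEq _ _ _ _ ▸ h3).2
        · rw [if_neg hmem, if_neg]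
          rintro ⟨h1, h2, h3⟩
          have halt : (a : ℕ) < n := by
            by_contra hge
            push_neg at hge
            rw [List.drop_eq_nil_of_le (by omega)] at h3
            exact List.cons_ne_nil _ _ h3
          apply hmem
          rw [Mmon_mem_support]
          refine ⟨h2 ▸ Finset.mem_Ico.2 ⟨le_refl _, halt⟩, ?_⟩
          have hdropa : W.drop (a : ℕ) = W[(a : ℕ)]'(by omega) :: W.drop ((a : ℕ) + 1) :=
            List.drop_eq_getElem_cons halt
          rw [hdropa] at h3
          have := (List.cons.injEq _ _ _ _ ▸ h3).1
          rw [this, hwf]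
          exact (List.getD_eq_getElem W _ halt).symm
      · rw [if_neg hup]
        by_cases hdown : (a : ℕ) = (c : ℕ) + 1
        · have hN : Nmat k j a c = -MvPolynomial.X (j, (c : ℕ)) := by
            simp only [Nmat, Matrix.of_apply]
            rw [if_neg hup, if_pos hdown]
          rw [hN, neg_mul, MvPolynomial.coeff_neg, mul_comm, MvPolynomial.coeff_mul_X']
          by_cases hmem : ((j, (c : ℕ)) : Fin d × ℕ) ∈ (Mmon wf S).support
          · rw [if_pos hmem]
            obtain ⟨hcS, hjc⟩ := (Mmon_mem_support wf S j (c : ℕ)).1 hmem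
            have hclt : (c : ℕ) < n := Finset.mem_range.1 (hS hcS)
            rw [hjc, Mmon_erase wf S (c : ℕ) hcS]
            rw [ih (S.erase (c : ℕ)) (fun x hx => hS (Finset.mem_of_mem_erase hx)) c]
            rw [if_neg, neg_zero]
            rintro ⟨-, h2, -⟩
            have : (c : ℕ) ∈ Finset.Ico (c : ℕ) n := Finset.mem_Ico.2 ⟨le_refl _, hclt⟩
            rw [← h2] at this
            exact (Finset.notMem_erase _ _) this
          · rw [if_neg hmem, neg_zero]
        · have hN : Nmat k j a c = 0 := by
            simp only [Nmat, Matrix.of_apply]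
            rw [if_neg hup, if_neg hdown]
          rw [hN, zero_mul, MvPolynomial.coeff_zero]
    rw [Finset.sum_congr rfl (fun c _ => hterm c)]
    by_cases hk1 : (a : ℕ) + 1 < k
    · have : ∀ c : Fin k, ((c : ℕ) = (a : ℕ) + 1) ↔ c = ⟨(a : ℕ) + 1, hk1⟩ := by
        intro c; rw [Fin.ext_iff]
      rw [Finset.sum_congr rfl (fun c _ => by rw [if_congr (this c) rfl rfl]),
        Finset.sum_ite_eq' Finset.univ (⟨(a : ℕ) + 1, hk1⟩ : Fin k)]
      simp [hnn]
    · have hz : ∀ c ∈ (Finset.univ : Finset (Fin k)), (if (c : ℕ) = (a : ℕ) + 1 then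
          (if (a : ℕ) ≤ n ∧ S = Finset.Ico (a : ℕ) n ∧ j :: V = W.drop (a : ℕ)
            then 1 else 0) else (0 : ℝ)) = 0 := by
        intro c _
        rw [if_neg]
        intro h
        exact hk1 (h ▸ c.isLt)
      rw [Finset.sum_congr rfl hz, Finset.sum_const_zero, eq_comm, if_neg]
      rintro ⟨-, -, h3⟩
      have halt : (a : ℕ) < n := by
        by_contra hge
        push_neg at hge
        rw [List.drop_eq_nil_of_le (by omega)] at h3
        exact List.cons_ne_nil _ _ h3
      omega

/-- Linear map extracting an entry of a matrix. -/
def entryLM {R A : Type*} [Semiring R] [AddCommMonoid A] [Module R A] {k : ℕ}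
    (i j : Fin k) : Matrix (Fin k) (Fin k) A →ₗ[R] A where
  toFun M := M i j
  map_add' _ _ := rfl
  map_smul' _ _ := rfl

end Stmt7Aux

/-- if `X^W ≠ 0` for some word `W` of length `n`, then for every `k ≥ n + 1` there
are tridiagonal antisymmetric `k × k` real matrices `N_1, …, N_d` such that the algebra
homomorphism `Ñ` sending `x_j ↦ N_j` satisfies `Ñ(X) ≠ 0`. -/
theorem stmt7 (d : ℕ) (hd : 0 < d) (X : FreeAlgebra ℝ (Fin d)) (W : List (Fin d))
    (hW : coords X W ≠ 0) (k : ℕ) (hk : W.length + 1 ≤ k) :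
    ∃ N : Fin d → Matrix (Fin k) (Fin k) ℝ,
      (∀ j, TriAnti (N j)) ∧ FreeAlgebra.lift ℝ N X ≠ 0 := by
  classical
  have hn : W.length < k := hk
  have h0 : 0 < k := by omega
  -- the polynomial entry
  have hcoeff : MvPolynomial.coeff
      (Stmt7Aux.Mmon (fun i => W.getD i ⟨0, hd⟩) (Finset.range W.length))
      ((FreeAlgebra.lift ℝ (Stmt7Aux.Nmat k) X) ⟨0, h0⟩ ⟨W.length, hn⟩) = coords X W := by
    -- two linear maps on the monoid algebra
    let e := (FreeAlgebra.equivMonoidAlgebraFreeMonoid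
        (R := ℝ) (X := Fin d)).symm.toLinearMap
    let f := (FreeAlgebra.lift ℝ (Stmt7Aux.Nmat (d := d) k)).toLinearMap
    let L1 : MonoidAlgebra ℝ (FreeMonoid (Fin d)) →ₗ[ℝ] ℝ :=
      (MvPolynomial.lcoeff ℝ
          (Stmt7Aux.Mmon (fun i => W.getD i ⟨0, hd⟩) (Finset.range W.length))).comp
        ((Stmt7Aux.entryLM (R := ℝ) ⟨0, h0⟩ ⟨W.length, hn⟩).comp (f.comp e))
    let L2 : MonoidAlgebra ℝ (FreeMonoid (Fin d)) →ₗ[ℝ] ℝ :=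
      { toFun := fun F => F.coeff (FreeMonoid.ofList W)
        map_add' := fun F G => rfl
        map_smul' := fun r F => rfl }
    have hLL : L1 = L2 := by
      apply MonoidAlgebra.lhom_ext'
      intro a
      apply LinearMap.ext
      intro r
      show L1 (MonoidAlgebra.single a r) = L2 (MonoidAlgebra.single a r)
      -- compute L1 on single a r
      have he : e (MonoidAlgebra.single a r) =
          r • (a.toList.map (FreeAlgebra.ι ℝ)).prod := by
        show (FreeAlgebra.equivMonoidAlgebraFreeMonoid (R := ℝ) (X := Fin d)).symm
            (MonoidAlgebra.single a r) = _
        rw [FreeAlgebra.equivMonoidAlgebraFreeMonoid]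
        show (MonoidAlgebra.lift ℝ (FreeAlgebra ℝ (Fin d)) (FreeMonoid (Fin d))
            (FreeMonoid.lift (FreeAlgebra.ι ℝ))) (MonoidAlgebra.single a r) = _
        rw [MonoidAlgebra.lift_single, FreeMonoid.lift_apply]
      have hfun : (⇑(FreeAlgebra.lift ℝ (Stmt7Aux.Nmat (d := d) k)) ∘ FreeAlgebra.ι ℝ)
          = Stmt7Aux.Nmat k := by
        funext x
        simp [FreeAlgebra.lift_ι_apply]
      have hf : f (r • (a.toList.map (FreeAlgebra.ι ℝ)).prod)
          = r • (a.toList.map (Stmt7Aux.Nmat k)).prod := by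
        rw [LinearMap.map_smul]
        congr 1
        show (FreeAlgebra.lift ℝ (Stmt7Aux.Nmat (d := d) k))
            (a.toList.map (FreeAlgebra.ι ℝ)).prod = _
        rw [map_list_prod, List.map_map, hfun]
      have hL1 : L1 (MonoidAlgebra.single a r)
          = r * MvPolynomial.coeff
              (Stmt7Aux.Mmon (fun i => W.getD i ⟨0, hd⟩) (Finset.range W.length))
              ((a.toList.map (Stmt7Aux.Nmat k)).prod ⟨0, h0⟩ ⟨W.length, hn⟩) := by
        show MvPolynomial.coeff _
            ((Stmt7Aux.entryLM (R := ℝ) ⟨0, h0⟩ ⟨W.length, hn⟩)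
              (f (e (MonoidAlgebra.single a r)))) = _
        rw [he, hf]
        show MvPolynomial.coeff _
            ((r • (a.toList.map (Stmt7Aux.Nmat k)).prod) ⟨0, h0⟩ ⟨W.length, hn⟩) = _
        rw [Matrix.smul_apply, MvPolynomial.coeff_smul, smul_eq_mul]
      refine hL1.trans ?_
      rw [Stmt7Aux.key hd W hn a.toList (Finset.range W.length)
        (fun x hx => hx) ⟨0, h0⟩]
      show _ = (MonoidAlgebra.single a r).coeff (FreeMonoid.ofList W)
      rw [MonoidAlgebra.coeff_single_apply]
      have hc0 : ((⟨0, h0⟩ : Fin k) : ℕ) = 0 := rfl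
      by_cases hEq : a.toList = W
      · rw [if_pos ⟨by omega, by rw [hc0, Finset.range_eq_Ico], by rw [hc0, List.drop_zero, hEq]⟩,
          if_pos, mul_one]
        rw [← hEq]
        rfl
      · rw [if_neg, if_neg, mul_zero]
        · intro h
          exact hEq (by rw [← FreeMonoid.toList_ofList (α := Fin d) W, ← h])
        · rintro ⟨-, -, h⟩
          rw [hc0, List.drop_zero] at h
          exact hEq h
    have := congrArg (fun L => L (FreeAlgebra.equivMonoidAlgebraFreeMonoid X)) hLL
    simp [L1, L2, e, f, coords] at this
    exact this
  set P : MvPolynomial (Fin d × ℕ) ℝ :=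
    (FreeAlgebra.lift ℝ (Stmt7Aux.Nmat k) X) ⟨0, h0⟩ ⟨W.length, hn⟩ with hP
  have hPne : P ≠ 0 := by
    intro h
    rw [h, MvPolynomial.coeff_zero] at hcoeff
    exact hW hcoeff.symm
  -- find an evaluation point
  have hex : ∃ t : Fin d × ℕ → ℝ, MvPolynomial.eval t P ≠ 0 := by
    by_contra h
    push_neg at h
    exact hPne (MvPolynomial.funext (fun t => by rw [h t, map_zero]))
  obtain ⟨t, ht⟩ := hex
  let φ : MvPolynomial (Fin d × ℕ) ℝ →ₐ[ℝ] ℝ := MvPolynomial.aeval t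
  refine ⟨fun j => (Stmt7Aux.Nmat k j).map φ, ?_, ?_⟩
  · intro j
    constructor
    · ext a b
      have : Stmt7Aux.Nmat k j a b + Stmt7Aux.Nmat k j b a = 0 := by
        simp only [Stmt7Aux.Nmat, Matrix.of_apply]
        rcases eq_or_ne (b : ℕ) ((a : ℕ) + 1) with hb | hb
        · rw [if_pos hb, if_neg (show ¬ (a : ℕ) = (b : ℕ) + 1 by omega), if_pos hb]
          ring
        · rcases eq_or_ne (a : ℕ) ((b : ℕ) + 1) with ha | ha
          · rw [if_neg hb, if_pos ha, if_pos ha]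
            ring
          · rw [if_neg hb, if_neg ha, if_neg ha, if_neg hb]
            ring
      simp only [Matrix.add_apply, Matrix.transpose_apply, Matrix.map_apply,
        Matrix.zero_apply]
      rw [← map_add, this, map_zero]
    · intro a b hab
      have hb : ¬ (b : ℕ) = (a : ℕ) + 1 := by
        intro h; exact hab (by omega)
      have ha : ¬ (a : ℕ) = (b : ℕ) + 1 := by
        intro h; exact hab (by omega)
      simp [Stmt7Aux.Nmat, hb, ha]
  · -- the lift over ℝ equals φ mapped entrywise
    have hcomp : (AlgHom.mapMatrix φ).comp (FreeAlgebra.lift ℝ (Stmt7Aux.Nmat (d := d) k))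
        = FreeAlgebra.lift ℝ (fun j => (Stmt7Aux.Nmat k j).map φ) := by
      apply FreeAlgebra.hom_ext
      funext j
      simp [FreeAlgebra.lift_ι_apply]
    intro hzero
    have hmapz : (AlgHom.mapMatrix φ) ((FreeAlgebra.lift ℝ (Stmt7Aux.Nmat (d := d) k)) X)
        = 0 := by
      rw [← AlgHom.comp_apply, hcomp, hzero]
    have hentry : φ P = 0 := by
      have := congrArg (fun M => M (⟨0, h0⟩ : Fin k) (⟨W.length, hn⟩ : Fin k)) hmapz
      simpa [AlgHom.mapMatrix_apply, Matrix.map_apply, hP] using this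
    apply ht
    rw [← hentry]
    show MvPolynomial.eval t P = MvPolynomial.aeval t P
    rw [MvPolynomial.aeval_def]
    rfl
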